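/- arXiv:2005.12689 — 4 statements merged into one kernel-verified Lean document; each statement's English description precedes it below -/
import Mathlib

section
/- Let d ≥ 3 and let ρ_t(x) = (2πt)^{-d/2} exp(−|x|²/(2t)) denote the standard heat kernel on ℝ^d. Let V : ℝ^d → ℝ be measurable, nonnegative and integrable. Then there exists a constant C depending only on d such that for every T > 0 and every ℓ with 0 < ℓ ≤ T/2, ∫_ℓ^{T−ℓ} ∫_{ℝ^d} (ρ_t(z) · ρ_{T−t}(z) / ρ_T(0)) · V(√2 · z) dz dt ≤ C · ‖V‖_{L¹} · ℓ^{−(d−2)/2}. -/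
open MeasureTheory Real

/-- The standard heat kernel `ρ_t(z) = (2πt)^{-d/2} exp(-|z|²/(2t))` on `ℝ^d`. -/
noncomputable def heatKernel (d : ℕ) (t : ℝ) (z : EuclideanSpace ℝ (Fin d)) : ℝ :=
  (2 * π * t) ^ (-(d : ℝ) / 2) * Real.exp (-‖z‖ ^ 2 / (2 * t))

/-- For `d ≥ 3` there is a constant `C`, depending only on `d`, such that, for every
measurable nonnegative integrable `V`, every `T > 0` and every `0 < ℓ ≤ T/2`,
`∫_ℓ^{T-ℓ} ∫_{ℝ^d} (ρ_t(z) ρ_{T-t}(z) / ρ_T(0)) V(√2 z) dz dt ≤ C ‖V‖_{L¹} ℓ^{-(d-2)/2}`. -/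
theorem stmt_3 (d : ℕ) (hd : 3 ≤ d) :
    ∃ C : ℝ,
      ∀ V : EuclideanSpace ℝ (Fin d) → ℝ, Measurable V → (∀ z, 0 ≤ V z) →
        Integrable V volume →
        ∀ T ℓ : ℝ, 0 < T → 0 < ℓ → ℓ ≤ T / 2 →
          (∫ t in Set.Ioc ℓ (T - ℓ), ∫ z,
              heatKernel d t z * heatKernel d (T - t) z /
                  heatKernel d T (0 : EuclideanSpace ℝ (Fin d)) *
                V (Real.sqrt 2 • z) ∂volume) ≤
            C * (∫ z, V z ∂volume) * ℓ ^ (-((d : ℝ) - 2) / 2) := by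
  have hπ : (0:ℝ) < π := Real.pi_pos
  set p : ℝ := (d : ℝ) / 2 with hp
  have hp1 : 1 < p := by
    have : (3:ℝ) ≤ (d:ℝ) := by exact_mod_cast hd
    simp only [hp]; linarith
  refine ⟨π ^ (-p) * (2 / (p - 1)), ?_⟩
  intro V hVmeas hVnn hVint T ℓ hT hℓ hℓT
  have hℓT' : ℓ ≤ T - ℓ := by linarith
  have hK0 : 0 ≤ ∫ z, V z := integral_nonneg hVnn
  set K : ℝ := ∫ z, V z with hK
  -- integrability of the scaled V
  have hs2 : (Real.sqrt 2 : ℝ) ≠ 0 := by positivity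
  have hV2int : Integrable (fun z : EuclideanSpace ℝ (Fin d) => V (Real.sqrt 2 • z)) volume :=
    (integrable_comp_smul_iff volume V hs2).2 hVint
  have hV2nn : ∀ z : EuclideanSpace ℝ (Fin d), 0 ≤ V (Real.sqrt 2 • z) := fun z => hVnn _
  have hV2le : (∫ z : EuclideanSpace ℝ (Fin d), V (Real.sqrt 2 • z)) ≤ K := by
    rw [MeasureTheory.Measure.integral_comp_smul volume V (Real.sqrt 2), finrank_euclideanSpace_fin, smul_eq_mul]
    have h1 : |((Real.sqrt 2 : ℝ) ^ d)⁻¹| ≤ 1 := by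
      rw [abs_of_nonneg (by positivity)]
      rw [inv_le_one_iff₀]
      right
      exact one_le_pow₀ (by nlinarith [Real.sq_sqrt (by norm_num : (2:ℝ) ≥ 0), Real.sqrt_nonneg 2])
    calc |((Real.sqrt 2 : ℝ) ^ d)⁻¹| * K ≤ 1 * K := by
          apply mul_le_mul_of_nonneg_right h1 hK0
      _ = K := one_mul K
  have hV2nn' : 0 ≤ ∫ z : EuclideanSpace ℝ (Fin d), V (Real.sqrt 2 • z) :=
    integral_nonneg hV2nn
  -- the constant in the inner bound
  set c : ℝ → ℝ := fun t => (2 * π * t) ^ (-p) * (2 * π * (T - t)) ^ (-p) / (2 * π * T) ^ (-p)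
    with hc
  have hneg : -(d:ℝ)/2 = -p := by simp [hp]; ring
  -- Step A: inner integral bound for t ∈ Ioc ℓ (T-ℓ)
  have stepA : ∀ t ∈ Set.Ioc ℓ (T - ℓ),
      (∫ z, heatKernel d t z * heatKernel d (T - t) z /
          heatKernel d T (0 : EuclideanSpace ℝ (Fin d)) * V (Real.sqrt 2 • z) ∂volume)
        ≤ c t * K := by
    intro t ht
    have ht0 : 0 < t := hℓ.trans ht.1
    have htT : 0 < T - t := by have := ht.2; linarith
    have hZ : heatKernel d T (0 : EuclideanSpace ℝ (Fin d)) = (2 * π * T) ^ (-p) := by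
      simp [heatKernel, hneg]
    have hZpos : (0:ℝ) < (2 * π * T) ^ (-p) :=
      Real.rpow_pos_of_pos (by positivity) _
    have hpt : ∀ z : EuclideanSpace ℝ (Fin d),
        heatKernel d t z * heatKernel d (T - t) z /
          heatKernel d T (0 : EuclideanSpace ℝ (Fin d)) * V (Real.sqrt 2 • z)
        ≤ c t * V (Real.sqrt 2 • z) := by
      intro z
      have hb1 : heatKernel d t z ≤ (2 * π * t) ^ (-p) := by
        rw [heatKernel, hneg]
        apply mul_le_of_le_one_right (le_of_lt (Real.rpow_pos_of_pos (by positivity) _))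
        apply Real.exp_le_one_iff.2
        apply div_nonpos_of_nonpos_of_nonneg
        · simp only [neg_nonpos]; positivity
        · positivity
      have hb2 : heatKernel d (T - t) z ≤ (2 * π * (T - t)) ^ (-p) := by
        rw [heatKernel, hneg]
        apply mul_le_of_le_one_right (le_of_lt (Real.rpow_pos_of_pos (by positivity) _))
        apply Real.exp_le_one_iff.2
        apply div_nonpos_of_nonpos_of_nonneg
        · simp only [neg_nonpos]; positivity
        · positivity
      have hb1' : 0 ≤ heatKernel d t z := by
        rw [heatKernel]; positivity
      have hb2' : 0 ≤ heatKernel d (T - t) z := by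
        rw [heatKernel]; positivity
      apply mul_le_mul_of_nonneg_right _ (hV2nn z)
      rw [hZ, hc]
      exact div_le_div_of_nonneg_right
        (mul_le_mul hb1 hb2 hb2' (le_of_lt (Real.rpow_pos_of_pos (by positivity) _))) hZpos.le
    have hcnn : 0 ≤ c t := by
      rw [hc]
      positivity
    calc (∫ z, heatKernel d t z * heatKernel d (T - t) z /
          heatKernel d T (0 : EuclideanSpace ℝ (Fin d)) * V (Real.sqrt 2 • z) ∂volume)
        ≤ ∫ z, c t * V (Real.sqrt 2 • z) ∂volume := by
          apply integral_mono_of_nonneg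
          · filter_upwards with z
            have h1 : 0 ≤ heatKernel d t z := by rw [heatKernel]; positivity
            have h2 : 0 ≤ heatKernel d (T - t) z := by rw [heatKernel]; positivity
            have h3 : 0 ≤ heatKernel d T (0 : EuclideanSpace ℝ (Fin d)) := by
              rw [heatKernel]; positivity
            have := hV2nn z
            positivity
          · exact hV2int.const_mul _
          · filter_upwards with z using hpt z
      _ = c t * ∫ z, V (Real.sqrt 2 • z) ∂volume := integral_const_mul _ _
      _ ≤ c t * K := mul_le_mul_of_nonneg_left hV2le hcnn
  -- c t is bounded by π^(-p) * (t^(-p) + (T-t)^(-p)) on the interval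
  have hcbound : ∀ t ∈ Set.Ioc ℓ (T - ℓ),
      c t ≤ π ^ (-p) * (t ^ (-p) + (T - t) ^ (-p)) := by
    intro t ht
    have ht0 : 0 < t := hℓ.trans ht.1
    have htT : 0 < T - t := by have := ht.2; linarith
    have hmin : (1:ℝ)/2 * min t (T - t) ≤ t * (T - t) / T := by
      rcases le_total t (T - t) with h | h
      · rw [min_eq_left h, le_div_iff₀ hT]
        nlinarith
      · rw [min_eq_right h, le_div_iff₀ hT]
        nlinarith
    have hmpos : 0 < min t (T - t) := lt_min ht0 htT
    have hceq : c t = (2 * π) ^ (-p) * (t * (T - t) / T) ^ (-p) := by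
      simp only [hc]
      rw [show (2*π*t : ℝ) = (2*π) * t by ring, show (2*π*(T-t) : ℝ) = (2*π) * (T-t) by ring,
        show (2*π*T : ℝ) = (2*π) * T by ring]
      rw [Real.mul_rpow (by positivity) ht0.le, Real.mul_rpow (by positivity) htT.le,
        Real.mul_rpow (by positivity) hT.le,
        Real.div_rpow (by positivity) hT.le, Real.mul_rpow ht0.le htT.le]
      field_simp
    rw [hceq]
    have h1 : (t * (T - t) / T) ^ (-p) ≤ ((1:ℝ)/2 * min t (T - t)) ^ (-p) := by
      apply Real.rpow_le_rpow_of_nonpos (by positivity) hmin (by linarith)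
    have h2 : ((1:ℝ)/2 * min t (T - t)) ^ (-p) = 2 ^ p * (min t (T - t)) ^ (-p) := by
      rw [Real.mul_rpow (by norm_num) hmpos.le, show ((1:ℝ)/2) = (2:ℝ)⁻¹ by norm_num,
        Real.inv_rpow (by norm_num), Real.rpow_neg (by norm_num), inv_inv]
    have h3 : (min t (T - t)) ^ (-p) ≤ t ^ (-p) + (T - t) ^ (-p) := by
      rcases le_total t (T - t) with h | h
      · rw [min_eq_left h]
        have : (0:ℝ) ≤ (T - t) ^ (-p) := (Real.rpow_pos_of_pos htT _).le
        linarith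
      · rw [min_eq_right h]
        have : (0:ℝ) ≤ t ^ (-p) := (Real.rpow_pos_of_pos ht0 _).le
        linarith
    have hkey : (2*π) ^ (-p) * 2 ^ p = π ^ (-p) := by
      rw [Real.mul_rpow (by norm_num) hπ.le, Real.rpow_neg (by norm_num)]
      field_simp [Real.rpow_neg hπ.le, Real.rpow_natCast]
    calc (2 * π) ^ (-p) * (t * (T - t) / T) ^ (-p)
        ≤ (2 * π) ^ (-p) * ((1:ℝ)/2 * min t (T - t)) ^ (-p) := by
          apply mul_le_mul_of_nonneg_left h1 (Real.rpow_pos_of_pos (by positivity) _).le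
      _ = π ^ (-p) * (min t (T - t)) ^ (-p) := by rw [h2, ← mul_assoc, hkey]
      _ ≤ π ^ (-p) * (t ^ (-p) + (T - t) ^ (-p)) := by
          apply mul_le_mul_of_nonneg_left h3 (Real.rpow_pos_of_pos hπ _).le
  -- integrability of the comparison functions on the interval
  have hcont : ContinuousOn (fun t => π ^ (-p) * (t ^ (-p) + (T - t) ^ (-p)) * K)
      (Set.Icc ℓ (T - ℓ)) := by
    apply ContinuousOn.mul _ continuousOn_const
    apply ContinuousOn.mul continuousOn_const
    apply ContinuousOn.add
    · apply ContinuousOn.rpow_const continuousOn_id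
      intro t ht
      exact Or.inl (by intro h; simp only [id_eq] at h; have := ht.1; linarith)
    · apply ContinuousOn.rpow_const (continuousOn_const.sub continuousOn_id)
      intro t ht
      exact Or.inl (by intro h; linarith [ht.2, show T - t = 0 from h])
  have hint2 : IntegrableOn (fun t => π ^ (-p) * (t ^ (-p) + (T - t) ^ (-p)) * K)
      (Set.Ioc ℓ (T - ℓ)) volume :=
    (hcont.integrableOn_compact isCompact_Icc).mono_set Set.Ioc_subset_Icc_self
  -- Step B: outer integral bound
  have stepB : (∫ t in Set.Ioc ℓ (T - ℓ), ∫ z,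
        heatKernel d t z * heatKernel d (T - t) z /
            heatKernel d T (0 : EuclideanSpace ℝ (Fin d)) *
          V (Real.sqrt 2 • z) ∂volume)
      ≤ ∫ t in Set.Ioc ℓ (T - ℓ), π ^ (-p) * (t ^ (-p) + (T - t) ^ (-p)) * K := by
    apply integral_mono_of_nonneg
    · rw [Filter.EventuallyLE, ae_restrict_iff' measurableSet_Ioc]
      filter_upwards with t ht
      have ht0 : 0 < t := hℓ.trans ht.1
      have htT : 0 < T - t := by have := ht.2; linarith
      simp only [Pi.zero_apply]
      apply integral_nonneg
      intro z
      have h1 : 0 ≤ heatKernel d t z := by rw [heatKernel]; positivity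
      have h2 : 0 ≤ heatKernel d (T - t) z := by rw [heatKernel]; positivity
      have h3 : 0 ≤ heatKernel d T (0 : EuclideanSpace ℝ (Fin d)) := by
        rw [heatKernel]; positivity
      have := hV2nn z
      positivity
    · exact hint2
    · rw [Filter.EventuallyLE, ae_restrict_iff' measurableSet_Ioc]
      filter_upwards with t ht
      calc (∫ z, heatKernel d t z * heatKernel d (T - t) z /
            heatKernel d T (0 : EuclideanSpace ℝ (Fin d)) * V (Real.sqrt 2 • z) ∂volume)
          ≤ c t * K := stepA t ht
        _ ≤ π ^ (-p) * (t ^ (-p) + (T - t) ^ (-p)) * K :=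
            mul_le_mul_of_nonneg_right (hcbound t ht) hK0
  -- compute the comparison integral
  have hIcalc : (∫ t in Set.Ioc ℓ (T - ℓ), π ^ (-p) * (t ^ (-p) + (T - t) ^ (-p)) * K)
      ≤ π ^ (-p) * (2 / (p - 1)) * K * ℓ ^ (1 - p) := by
    rw [← intervalIntegral.integral_of_le hℓT']
    have h0 : (0:ℝ) ∉ Set.uIcc ℓ (T - ℓ) := by
      rw [Set.uIcc_of_le hℓT']
      intro h
      linarith [h.1]
    have hr : -p ≠ -1 := by intro h; rw [neg_inj] at h; linarith
    have hI1 : (∫ t in ℓ..(T - ℓ), t ^ (-p)) = ((T-ℓ) ^ (-p+1) - ℓ ^ (-p+1)) / (-p+1) :=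
      integral_rpow (Or.inr ⟨hr, h0⟩)
    have hI2 : (∫ t in ℓ..(T - ℓ), (T - t) ^ (-p)) = ∫ t in ℓ..(T - ℓ), t ^ (-p) := by
      rw [intervalIntegral.integral_comp_sub_left (fun s => s ^ (-p)) T]
      norm_num
    have hIbound : (∫ t in ℓ..(T - ℓ), t ^ (-p)) ≤ ℓ ^ (1 - p) / (p - 1) := by
      rw [hI1]
      have h1 : (0:ℝ) < ℓ ^ (-p+1) := Real.rpow_pos_of_pos hℓ _
      have h2 : (0:ℝ) < (T-ℓ) ^ (-p+1) := Real.rpow_pos_of_pos (by linarith) _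
      have key : ((T-ℓ) ^ (-p+1) - ℓ ^ (-p+1)) / (-p+1)
          = (ℓ ^ (-p+1) - (T-ℓ) ^ (-p+1)) / (p-1) := by
        rw [show (-p+1:ℝ) = -(p-1) by ring, div_neg, ← neg_div, neg_sub]
      rw [key, show (1-p:ℝ) = -p+1 by ring, div_le_div_iff₀ (by linarith) (by linarith)]
      nlinarith
    have hsplit : (∫ t in ℓ..(T - ℓ), π ^ (-p) * (t ^ (-p) + (T - t) ^ (-p)) * K)
        = π ^ (-p) * K * ((∫ t in ℓ..(T - ℓ), t ^ (-p)) + ∫ t in ℓ..(T - ℓ), (T - t) ^ (-p)) := by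
      rw [← intervalIntegral.integral_add]
      · rw [← intervalIntegral.integral_const_mul]
        congr 1
        ext t
        ring
      · exact intervalIntegral.intervalIntegrable_rpow (Or.inr h0)
      · have base : IntervalIntegrable (fun s : ℝ => s ^ (-p)) volume ℓ (T - ℓ) :=
          intervalIntegral.intervalIntegrable_rpow (Or.inr h0)
        have h' := (base.comp_sub_left T).symm
        simpa [show T - (T - ℓ) = ℓ by ring] using h'
    rw [hsplit, hI2]
    have hπp : (0:ℝ) < π ^ (-p) := Real.rpow_pos_of_pos hπ _
    calc π ^ (-p) * K * ((∫ t in ℓ..(T - ℓ), t ^ (-p)) + ∫ t in ℓ..(T - ℓ), t ^ (-p))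
        ≤ π ^ (-p) * K * (ℓ ^ (1-p) / (p-1) + ℓ ^ (1-p) / (p-1)) := by
          apply mul_le_mul_of_nonneg_left (by linarith) (by positivity)
      _ = π ^ (-p) * (2 / (p - 1)) * K * ℓ ^ (1 - p) := by
          field_simp
          ring
  have hexp : -((d : ℝ) - 2) / 2 = 1 - p := by rw [hp]; ring
  calc (∫ t in Set.Ioc ℓ (T - ℓ), ∫ z,
        heatKernel d t z * heatKernel d (T - t) z /
            heatKernel d T (0 : EuclideanSpace ℝ (Fin d)) *
          V (Real.sqrt 2 • z) ∂volume)
      ≤ ∫ t in Set.Ioc ℓ (T - ℓ), π ^ (-p) * (t ^ (-p) + (T - t) ^ (-p)) * K := stepB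
    _ ≤ π ^ (-p) * (2 / (p - 1)) * K * ℓ ^ (1 - p) := hIcalc
    _ = π ^ (-p) * (2 / (p - 1)) * K * ℓ ^ (-((d : ℝ) - 2) / 2) := by rw [hexp]
end

section
/- Let d ≥ 1 and let ρ_t(x) = (2πt)^{-d/2} exp(−|x|²/(2t)) denote the standard heat kernel on ℝ^d. There exist constants C > 0, c > 0 and δ₀ ∈ (0, 1/2), depending only on d, such that for every δ ∈ (0, δ₀] and every y ∈ ℝ^d, ∫_{ℝ^d} ρ_δ(b) · |ρ_{1/2−δ}(y − b) / ρ_{1/2}(y) − 1| db ≤ C · exp(c·δ·|y|²) · δ^{1/2} · (|y|² + 1). -/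
open MeasureTheory Real

lemma heatKernel_pos (d : ℕ) {t : ℝ} (ht : 0 < t) (z : EuclideanSpace ℝ (Fin d)) :
    0 < heatKernel d t z := by
  unfold heatKernel
  have := Real.pi_pos
  positivity

lemma gauss_integrable (d : ℕ) {a : ℝ} (ha : 0 < a) :
    Integrable (fun b : EuclideanSpace ℝ (Fin d) => Real.exp (-a * ‖b‖ ^ 2)) := by
  have h := (GaussianFourier.integrable_cexp_neg_mul_sq_norm_add
      (V := EuclideanSpace ℝ (Fin d)) (b := (a : ℂ)) (by simpa using ha) 0 0).re
  refine h.congr (Filter.Eventually.of_forall fun v => ?_)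
  simp only [zero_mul, add_zero, RCLike.re_to_complex]
  rw [show -(a:ℂ) * (‖v‖:ℂ)^2 = ((-a * ‖v‖^2 : ℝ) : ℂ) by push_cast; ring,
    Complex.exp_ofReal_re]

lemma gauss_integral (d : ℕ) {a : ℝ} (ha : 0 < a) :
    ∫ b : EuclideanSpace ℝ (Fin d), Real.exp (-a * ‖b‖ ^ 2) = (π / a) ^ ((d : ℝ) / 2) := by
  rw [GaussianFourier.integral_rexp_neg_mul_sq_norm ha]
  norm_num [finrank_euclideanSpace_fin]

lemma core (d : ℕ) {δ s r q : ℝ} (hδ : 0 < δ) (hδ0 : δ ≤ 1/64) (hs0 : 0 ≤ s)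
    (hr0 : 0 ≤ r) (hq1 : (s - r)^2 ≤ q^2) (hq2 : q^2 ≤ (s + r)^2) :
    ((2*π*δ) ^ (-(d:ℝ)/2) * Real.exp (-r^2/(2*δ))) *
      |Real.exp ((-(d:ℝ)/2) * Real.log (1 - 2*δ) - q^2/(1-2*δ) + s^2) - 1| ≤
      ((2*(d:ℝ)+53) * Real.exp (2*(d:ℝ)) * Real.exp (68 * δ * s^2) * δ ^ ((1:ℝ)/2) *
        (s^2+1) * (2*π*δ) ^ (-(d:ℝ)/2)) * Real.exp (-(5/(16*δ)) * r^2) := by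
  have hπ := Real.pi_pos
  have h12 : (0:ℝ) < 1 - 2*δ := by linarith
  have hd0 : (0:ℝ) ≤ d := Nat.cast_nonneg d
  obtain ⟨F, hF⟩ : ∃ F : ℝ, F = (-(d:ℝ)/2) * Real.log (1 - 2*δ) - q^2/(1-2*δ) + s^2 := ⟨_, rfl⟩
  rw [← hF]
  -- bounds on log
  have hL0 : Real.log (1-2*δ) ≤ 0 := Real.log_nonpos (by linarith) (by linarith)
  have hL4 : -(4*δ) ≤ Real.log (1-2*δ) := by
    rw [Real.le_log_iff_exp_le h12]
    have h1 : Real.exp (-(4*δ)) ≤ (1+4*δ)⁻¹ := by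
      rw [Real.exp_neg]
      exact inv_anti₀ (by linarith) (by linarith [Real.add_one_le_exp (4*δ)])
    have h2 : (1+4*δ)⁻¹ ≤ 1-2*δ := by
      rw [inv_eq_one_div, div_le_iff₀ (by linarith)]
      nlinarith
    linarith
  obtain ⟨u, hu⟩ : ∃ u : ℝ, u = (1-2*δ)⁻¹ := ⟨_, rfl⟩
  have hu0 : 0 < u := hu ▸ inv_pos.mpr h12
  have huc : u * (1-2*δ) = 1 := hu ▸ inv_mul_cancel₀ h12.ne'
  have hu2 : u ≤ 2 := by
    have m1 : δ*u ≤ (1/64)*u := mul_le_mul_of_nonneg_right hδ0 hu0.le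
    linarith [huc, m1]
  have hu1 : 1 ≤ u := by
    have m2 : 0 ≤ δ*u := mul_nonneg hδ.le hu0.le
    linarith [huc, m2]
  have hu3 : u ≤ 1 + 4*δ := by
    have m3 : δ*u ≤ δ*2 := mul_le_mul_of_nonneg_left hu2 hδ.le
    linarith [huc, m3]
  obtain ⟨B, hB⟩ : ∃ B : ℝ, B = 2*(d:ℝ)*δ + 4*δ*s^2 + 4*s*r + 2*r^2 := ⟨_, rfl⟩
  have hB0 : 0 ≤ B := by rw [hB]; positivity
  have hFdiv : F = (-(d:ℝ)/2) * Real.log (1 - 2*δ) - q^2*u + s^2 := by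
    rw [hF, hu]; ring
  have hFB : F ≤ B := by
    rw [hFdiv, hB]
    have h1 : (-(d:ℝ)/2) * Real.log (1-2*δ) ≤ 2*(d:ℝ)*δ := by
      linarith [mul_le_mul_of_nonneg_left hL4 (show (0:ℝ) ≤ (d:ℝ)/2 by positivity)]
    have h2 : (s-r)^2 * u ≤ q^2 * u := mul_le_mul_of_nonneg_right hq1 hu0.le
    linarith [h1, h2, mul_le_mul_of_nonneg_left hu2 (mul_nonneg hs0 hr0),
      mul_nonneg (sq_nonneg s) (by linarith : (0:ℝ) ≤ u - 1),
      mul_nonneg (sq_nonneg r) hu0.le, mul_nonneg hδ.le (sq_nonneg s),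
      mul_nonneg hs0 hr0, sq_nonneg r]
  have hFB' : -B ≤ F := by
    rw [hFdiv, hB]
    have h1 : 0 ≤ (-(d:ℝ)/2) * Real.log (1-2*δ) := by
      have := mul_le_mul_of_nonneg_left hL0 (show (0:ℝ) ≤ (d:ℝ)/2 by positivity)
      linarith
    have h2 : q^2 * u ≤ (s+r)^2 * u := mul_le_mul_of_nonneg_right hq2 hu0.le
    linarith [h1, h2, mul_le_mul_of_nonneg_left hu3 (sq_nonneg s),
      mul_le_mul_of_nonneg_left hu2 (mul_nonneg hs0 hr0),
      mul_le_mul_of_nonneg_left hu2 (sq_nonneg r),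
      mul_nonneg hd0 hδ.le]
  have habs : |Real.exp F - 1| ≤ B * Real.exp B := by
    rw [abs_le]
    have hEx := Real.add_one_le_exp (-B)
    have hEB : 1 ≤ Real.exp B := Real.one_le_exp hB0
    constructor
    · have h4 : Real.exp (-B) ≤ Real.exp F := Real.exp_le_exp.mpr hFB'
      have m : B*1 ≤ B*Real.exp B := mul_le_mul_of_nonneg_left hEB hB0
      linarith [h4, hEx, m]
    · have h4 : Real.exp F ≤ Real.exp B := Real.exp_le_exp.mpr hFB
      have h6 : (1-B) * Real.exp B ≤ Real.exp (-B) * Real.exp B := by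
        apply mul_le_mul_of_nonneg_right (by linarith) (Real.exp_nonneg _)
      rw [← Real.exp_add, neg_add_cancel, Real.exp_zero] at h6
      linarith [h4, h6]
  obtain ⟨P, hP⟩ : ∃ P : ℝ, P = δ ^ ((1:ℝ)/2) := ⟨_, rfl⟩
  rw [← hP]
  have hP0 : 0 < P := hP ▸ Real.rpow_pos_of_pos hδ _
  have hPP : P * P = δ := by
    rw [hP, ← Real.rpow_add hδ]; norm_num
  have hP1 : P ≤ 1 := hP ▸ Real.rpow_le_one hδ.le (by linarith) (by norm_num)
  have hδP : δ ≤ P := by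
    have e1 : P*P ≤ P*1 := mul_le_mul_of_nonneg_left hP1 hP0.le
    linarith [hPP, e1]
  obtain ⟨E, hE⟩ : ∃ E : ℝ, E = Real.exp (r^2/(16*δ)) := ⟨_, rfl⟩
  have hE1 : 1 ≤ E := hE ▸ Real.one_le_exp (by positivity)
  have hE0 : 0 ≤ E := by linarith
  have hrE2 : r^2 ≤ 16*E*δ := by
    have h7 : r^2/(16*δ) ≤ E := by
      have := Real.add_one_le_exp (r^2/(16*δ)); rw [hE]; linarith
    rw [div_le_iff₀ (by positivity)] at h7
    linarith
  have hQ1 : δ ≤ P*(s^2+1)*E := by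
    linarith [mul_nonneg (mul_nonneg hP0.le (by positivity : (0:ℝ) ≤ s^2+1))
        (by linarith : (0:ℝ) ≤ E - 1), mul_nonneg hP0.le (sq_nonneg s), hδP]
  have hrE2' : r^2 ≤ 16*E*(P*P) := by rw [hPP]; exact hrE2
  have t3 : 4*s*r ≤ 17 * (P*(s^2+1)*E) := by
    rw [← mul_le_mul_iff_of_pos_right hP0]
    have a1 : 0 ≤ s*(P-r)^2 := mul_nonneg hs0 (sq_nonneg _)
    have a2 : s*r^2 ≤ s*(16*E*(P*P)) := mul_le_mul_of_nonneg_left hrE2' hs0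
    have a4 : 0 ≤ (s-1)^2*P^2 := mul_nonneg (sq_nonneg _) (sq_nonneg _)
    have a5 : 0 ≤ (s^2+1)*P^2*(E-1) :=
      mul_nonneg (mul_nonneg (by positivity) (sq_nonneg _)) (by linarith)
    have a6 : 0 ≤ (s-1)^2*(E*P^2) :=
      mul_nonneg (sq_nonneg _) (mul_nonneg hE0 (sq_nonneg _))
    linarith [a1, a2, a4, a5, a6]
  have t4 : 2*r^2 ≤ 32 * (P*(s^2+1)*E) := by
    have b1 : E*δ ≤ E*P := mul_le_mul_of_nonneg_left hδP hE0
    have b2 : 0 ≤ E*P*s^2 := mul_nonneg (mul_nonneg hE0 hP0.le) (sq_nonneg s)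
    linarith [hrE2, b1, b2]
  have hBP : B ≤ (2*(d:ℝ)+53) * (P*(s^2+1)*E) := by
    have t1 : 2*(d:ℝ)*δ ≤ 2*(d:ℝ) * (P*(s^2+1)*E) := by
      have := mul_le_mul_of_nonneg_left hQ1 (show (0:ℝ) ≤ 2*(d:ℝ) by positivity)
      linarith
    have t2 : 4*δ*s^2 ≤ 4 * (P*(s^2+1)*E) := by
      have d1 : δ*s^2 ≤ P*s^2 := mul_le_mul_of_nonneg_right hδP (sq_nonneg s)
      have d2 : 0 ≤ P*(s^2+1)*(E-1) :=
        mul_nonneg (mul_nonneg hP0.le (by positivity)) (by linarith)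
      linarith [d1, d2, hP0.le]
    rw [hB]; linarith
  have hBe : B ≤ 2*(d:ℝ) + 68*δ*s^2 + r^2/(8*δ) := by
    rw [hB, ← sub_le_iff_le_add', le_div_iff₀ (by positivity : (0:ℝ) < 8*δ)]
    have n1 : 0 ≤ (d:ℝ)*(δ*(1-δ)) := mul_nonneg hd0 (mul_nonneg hδ.le (by linarith))
    have n2 : (16*δ)*r^2 ≤ (1/2)*r^2 :=
      mul_le_mul_of_nonneg_right (by linarith) (sq_nonneg r)
    have n3 : 0 ≤ δ^2*s^2 := mul_nonneg (sq_nonneg δ) (sq_nonneg s)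
    linarith [sq_nonneg (32*δ*s - r), n1, n2, n3]
  have hExpB : Real.exp B ≤ Real.exp (2*(d:ℝ)) * Real.exp (68*δ*s^2) * Real.exp (r^2/(8*δ)) := by
    rw [← Real.exp_add, ← Real.exp_add]
    exact Real.exp_le_exp.mpr hBe
  obtain ⟨G, hG⟩ : ∃ G : ℝ, G = (2*π*δ) ^ (-(d:ℝ)/2) := ⟨_, rfl⟩
  rw [← hG]
  have hG0 : 0 < G := hG ▸ Real.rpow_pos_of_pos (by positivity) _
  have hexp : Real.exp (-r^2/(2*δ)) * (E * Real.exp (r^2/(8*δ))) =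
      Real.exp (-(5/(16*δ)) * r^2) := by
    rw [hE, ← Real.exp_add, ← Real.exp_add]
    congr 1
    field_simp
    ring
  calc G * Real.exp (-r^2/(2*δ)) * |Real.exp F - 1|
      ≤ G * Real.exp (-r^2/(2*δ)) * (B * Real.exp B) := by
        apply mul_le_mul_of_nonneg_left habs (by positivity)
    _ ≤ G * Real.exp (-r^2/(2*δ)) *
        (((2*(d:ℝ)+53) * (P*(s^2+1)*E)) *
          (Real.exp (2*(d:ℝ)) * Real.exp (68*δ*s^2) * Real.exp (r^2/(8*δ)))) := by
        apply mul_le_mul_of_nonneg_left _ (by positivity)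
        exact mul_le_mul hBP hExpB (Real.exp_nonneg _) (by positivity)
    _ = ((2*(d:ℝ)+53) * Real.exp (2*(d:ℝ)) * Real.exp (68 * δ * s^2) * P *
        (s^2+1) * G) * Real.exp (-(5/(16*δ)) * r^2) := by
        rw [← hexp]; ring

lemma ptwise (d : ℕ) {δ : ℝ} (hδ : 0 < δ) (hδ0 : δ ≤ 1/64) (y b : EuclideanSpace ℝ (Fin d)) :
    heatKernel d δ b * |heatKernel d (1 / 2 - δ) (y - b) / heatKernel d (1 / 2) y - 1| ≤
      ((2*(d:ℝ)+53) * Real.exp (2*(d:ℝ)) * Real.exp (68 * δ * ‖y‖^2) * δ ^ ((1:ℝ)/2) *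
        (‖y‖^2+1) * (2*π*δ) ^ (-(d:ℝ)/2)) * Real.exp (-(5/(16*δ)) * ‖b‖^2) := by
  have hπ := Real.pi_pos
  have h12 : (0:ℝ) < 1 - 2*δ := by linarith
  have hlog2 : Real.log (2*π*(1/2-δ)) = Real.log (1-2*δ) + Real.log (2*π*(1/2)) := by
    rw [show (2*π*((1:ℝ)/2-δ)) = (1-2*δ) * (2*π*(1/2)) by ring,
      Real.log_mul h12.ne' (by positivity)]
  have hratio : heatKernel d (1 / 2 - δ) (y - b) / heatKernel d (1 / 2) y =
      Real.exp ((-(d:ℝ)/2) * Real.log (1 - 2*δ) - ‖y - b‖^2/(1-2*δ) + ‖y‖^2) := by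
    unfold heatKernel
    rw [Real.rpow_def_of_pos (by nlinarith : (0:ℝ) < 2*π*(1/2-δ)),
      Real.rpow_def_of_pos (by positivity),
      ← Real.exp_add, ← Real.exp_add, ← Real.exp_sub, Real.exp_eq_exp]
    rw [show (2*((1:ℝ)/2-δ)) = 1-2*δ by ring, show (2*((1:ℝ)/2)) = 1 by norm_num, div_one,
      hlog2]
    ring
  have hq1 : (‖y‖ - ‖b‖)^2 ≤ ‖y - b‖^2 := by
    have h := abs_norm_sub_norm_le y b
    calc (‖y‖ - ‖b‖)^2 = |‖y‖ - ‖b‖|^2 := (sq_abs _).symm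
    _ ≤ ‖y - b‖^2 := pow_le_pow_left₀ (abs_nonneg _) h 2
  have hq2 : ‖y - b‖^2 ≤ (‖y‖ + ‖b‖)^2 := pow_le_pow_left₀ (norm_nonneg _) (norm_sub_le y b) 2
  have hρ : heatKernel d δ b = (2*π*δ) ^ (-(d:ℝ)/2) * Real.exp (-‖b‖^2/(2*δ)) := rfl
  rw [hratio, hρ]
  exact core d hδ hδ0 (norm_nonneg y) (norm_nonneg b) hq1 hq2

/-- There are constants `C > 0`, `c > 0` and `δ₀ ∈ (0, 1/2)`, depending only on `d`, with
`∫ ρ_δ(b) |ρ_{1/2-δ}(y-b)/ρ_{1/2}(y) - 1| db ≤ C exp(cδ|y|²) δ^{1/2} (|y|² + 1)`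
for all `δ ∈ (0, δ₀]` and `y ∈ ℝ^d`. -/
theorem stmt_5 (d : ℕ) (hd : 1 ≤ d) :
    ∃ C c δ₀ : ℝ, 0 < C ∧ 0 < c ∧ 0 < δ₀ ∧ δ₀ < 1 / 2 ∧
      ∀ δ : ℝ, 0 < δ → δ ≤ δ₀ → ∀ y : EuclideanSpace ℝ (Fin d),
        (∫ b, heatKernel d δ b *
            |heatKernel d (1 / 2 - δ) (y - b) / heatKernel d (1 / 2) y - 1| ∂volume) ≤
          C * Real.exp (c * δ * ‖y‖ ^ 2) * δ ^ ((1 : ℝ) / 2) * (‖y‖ ^ 2 + 1) := by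
  have hπ := Real.pi_pos
  refine ⟨(2*(d:ℝ)+53) * Real.exp (2*(d:ℝ)) * 2^d, 68, 1/64,
    by positivity, by norm_num, by norm_num, by norm_num, ?_⟩
  intro δ hδ hδ0 y
  have h5 : (0:ℝ) < 5/(16*δ) := by positivity
  set K : ℝ := (2*(d:ℝ)+53) * Real.exp (2*(d:ℝ)) * Real.exp (68 * δ * ‖y‖^2) *
    δ ^ ((1:ℝ)/2) * (‖y‖^2+1) * (2*π*δ) ^ (-(d:ℝ)/2) with hK
  have hK0 : 0 ≤ K := by rw [hK]; positivity
  have step1 : (∫ b, heatKernel d δ b *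
        |heatKernel d (1 / 2 - δ) (y - b) / heatKernel d (1 / 2) y - 1| ∂volume) ≤
      ∫ b : EuclideanSpace ℝ (Fin d), K * Real.exp (-(5/(16*δ)) * ‖b‖^2) ∂volume := by
    apply integral_mono_of_nonneg
    · exact Filter.Eventually.of_forall fun b =>
        mul_nonneg (heatKernel_pos d hδ b).le (abs_nonneg _)
    · exact (gauss_integrable d h5).const_mul K
    · exact Filter.Eventually.of_forall fun b => ptwise d hδ hδ0 y b
  rw [integral_const_mul, gauss_integral d h5] at step1
  refine step1.trans ?_
  -- the constant part
  have hA0 : (0:ℝ) < (2*π*δ) ^ ((d:ℝ)/2) := Real.rpow_pos_of_pos (by positivity) _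
  have hGI : (2*π*δ) ^ (-(d:ℝ)/2) * (π/(5/(16*δ))) ^ ((d:ℝ)/2) ≤ 2^d := by
    have h2 : π/(5/(16*δ)) = (8/5) * (2*π*δ) := by field_simp; ring
    have hinv : (2*π*δ) ^ (-(d:ℝ)/2) = ((2*π*δ) ^ ((d:ℝ)/2))⁻¹ := by
      rw [neg_div, Real.rpow_neg (by positivity)]
    rw [hinv, h2, Real.mul_rpow (show (0:ℝ) ≤ 8/5 by norm_num)
        (show (0:ℝ) ≤ 2*π*δ by positivity),
      mul_comm ((8/5:ℝ) ^ ((d:ℝ)/2)) _, ← mul_assoc, inv_mul_cancel₀ hA0.ne', one_mul]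
    have h85 : ((8:ℝ)/5) ^ ((d:ℝ)/2) ≤ (4:ℝ) ^ ((d:ℝ)/2) :=
      Real.rpow_le_rpow (by norm_num) (by norm_num) (by positivity)
    have h41 : (4:ℝ) ^ ((1:ℝ)/2) = 2 := by
      rw [show (4:ℝ) = 2^(2:ℕ) by norm_num, ← Real.rpow_natCast 2 2,
        ← Real.rpow_mul (by norm_num : (0:ℝ) ≤ 2)]
      norm_num
    have h4 : (4:ℝ) ^ ((d:ℝ)/2) = 2^d := by
      rw [show (d:ℝ)/2 = (1/2)*(d:ℝ) by ring,
        Real.rpow_mul (by norm_num : (0:ℝ) ≤ 4), h41, Real.rpow_natCast]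
    calc ((8:ℝ)/5) ^ ((d:ℝ)/2) ≤ (4:ℝ) ^ ((d:ℝ)/2) := h85
    _ = 2^d := h4
  calc K * (π/(5/(16*δ))) ^ ((d:ℝ)/2)
      = ((2*(d:ℝ)+53) * Real.exp (2*(d:ℝ)) * Real.exp (68 * δ * ‖y‖^2) *
          δ ^ ((1:ℝ)/2) * (‖y‖^2+1)) *
        ((2*π*δ) ^ (-(d:ℝ)/2) * (π/(5/(16*δ))) ^ ((d:ℝ)/2)) := by rw [hK]; ring
    _ ≤ ((2*(d:ℝ)+53) * Real.exp (2*(d:ℝ)) * Real.exp (68 * δ * ‖y‖^2) *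
          δ ^ ((1:ℝ)/2) * (‖y‖^2+1)) * 2^d := by
        apply mul_le_mul_of_nonneg_left hGI (by positivity)
    _ = (2*(d:ℝ)+53) * Real.exp (2*(d:ℝ)) * 2^d * Real.exp (68 * δ * ‖y‖^2) *
          δ ^ ((1:ℝ)/2) * (‖y‖^2+1) := by ring
end

section
/- Let d ≥ 1 and let ρ_t(x) = (2πt)^{-d/2} exp(−|x|²/(2t)) denote the standard heat kernel on ℝ^d. There exist constants C > 0, c > 0 and δ₀ ∈ (0, 1/2), depending only on d, such that for all T > 0, all ℓ > 0 with ℓ/T ≤ δ₀, and all y ∈ ℝ^d, ∫_{ℝ^d} ρ_ℓ(Z) · |ρ_{T/2−ℓ}(√T·y − Z) / ρ_{T/2}(√T·y) − 1| dZ ≤ C · exp(c·(ℓ/T)·|y|²) · (ℓ/T)^{1/2} · (|y|² + 1). -/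
open MeasureTheory Real

lemma heatKernel_eq (d : ℕ) {t : ℝ} (ht : 0 < t) (z : EuclideanSpace ℝ (Fin d)) :
    heatKernel d t z = (2 * π * t) ^ (-(d : ℝ) / 2) * Real.exp (-(1/(2*t)) * ‖z‖ ^ 2) := by
  unfold heatKernel
  congr 2
  field_simp

lemma integrable_gauss (d : ℕ) {b : ℝ} (hb : 0 < b) :
    Integrable (fun z : EuclideanSpace ℝ (Fin d) => Real.exp (-b * ‖z‖ ^ 2)) := by
  have h := GaussianFourier.integrable_cexp_neg_mul_sq_norm_add
    (V := EuclideanSpace ℝ (Fin d)) (b := (b : ℂ)) (by simpa using hb) 0 0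
  simp only [mul_zero, zero_mul, add_zero] at h
  refine h.re.congr (Filter.Eventually.of_forall fun z => ?_)
  have : (-(b : ℂ) * (‖z‖ : ℂ) ^ 2) = ((-b * ‖z‖ ^ 2 : ℝ) : ℂ) := by push_cast; ring
  simp only [RCLike.re_to_complex, this, Complex.exp_ofReal_re]

lemma integral_gauss (d : ℕ) {b : ℝ} (hb : 0 < b) :
    ∫ z : EuclideanSpace ℝ (Fin d), Real.exp (-b * ‖z‖ ^ 2) = (π / b) ^ ((d : ℝ) / 2) := by
  rw [GaussianFourier.integral_rexp_neg_mul_sq_norm hb, finrank_euclideanSpace_fin]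

lemma integrable_heatKernel (d : ℕ) {t : ℝ} (ht : 0 < t) :
    Integrable (heatKernel d t) := by
  refine (((integrable_gauss d (show (0:ℝ) < 1/(2*t) by positivity)).const_mul
    ((2 * π * t) ^ (-(d : ℝ) / 2))).congr ?_)
  exact Filter.Eventually.of_forall fun z => (heatKernel_eq d ht z).symm

lemma integral_heatKernel (d : ℕ) {t : ℝ} (ht : 0 < t) :
    ∫ z : EuclideanSpace ℝ (Fin d), heatKernel d t z = 1 := by
  simp only [heatKernel_eq d ht]
  rw [integral_const_mul, integral_gauss d (by positivity)]
  have h1 : π / (1 / (2 * t)) = 2 * π * t := by field_simp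
  rw [h1, ← Real.rpow_add (by positivity), neg_div, neg_add_cancel, Real.rpow_zero]

open scoped RealInnerProductSpace

lemma heatKernel_mul (d : ℕ) {a b : ℝ} (ha : 0 < a) (hb : 0 < b)
    (x z : EuclideanSpace ℝ (Fin d)) :
    heatKernel d a z * heatKernel d b (x - z) =
      heatKernel d (a + b) x *
        heatKernel d (a * b / (a + b)) (z - (a / (a + b)) • x) := by
  have hab : 0 < a + b := by positivity
  have hc : 0 < a * b / (a + b) := by positivity
  unfold heatKernel
  rw [mul_mul_mul_comm, mul_mul_mul_comm ((2 * π * (a + b)) ^ (-(d : ℝ) / 2)),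
    ← Real.mul_rpow (by positivity) (by positivity),
    ← Real.mul_rpow (by positivity) (by positivity),
    ← Real.exp_add, ← Real.exp_add]
  congr 2
  · field_simp
  · have h1 : ‖x - z‖ ^ 2 = ‖x‖ ^ 2 - 2 * ⟪x, z⟫ + ‖z‖ ^ 2 := norm_sub_sq_real x z
    have h2 : ‖z - (a / (a + b)) • x‖ ^ 2 =
        ‖z‖ ^ 2 - 2 * ((a / (a + b)) * ⟪x, z⟫) + (a / (a + b)) ^ 2 * ‖x‖ ^ 2 := by
      rw [norm_sub_sq_real, real_inner_smul_right, norm_smul, real_inner_comm]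
      simp [Real.norm_eq_abs, mul_pow, sq_abs, abs_of_pos ha, abs_of_pos hab]
    rw [h1, h2]
    field_simp
    ring

lemma heatKernel_sq (d : ℕ) {b : ℝ} (hb : 0 < b) (w : EuclideanSpace ℝ (Fin d)) :
    heatKernel d b w ^ 2 = (4 * π * b) ^ (-(d : ℝ) / 2) * heatKernel d (b / 2) w := by
  unfold heatKernel
  rw [mul_pow, ← mul_assoc]
  congr 1
  · rw [← Real.rpow_natCast ((2 * π * b) ^ (-(d : ℝ) / 2)) 2,
      ← Real.rpow_mul (by positivity),
      ← Real.mul_rpow (by positivity) (by positivity)]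
    rw [show (4 * π * b) * (2 * π * (b / 2)) = ((2 * π * b) ^ (2 : ℕ) : ℝ) by ring,
      ← Real.rpow_natCast (2 * π * b) 2, ← Real.rpow_mul (by positivity)]
    norm_num
    ring_nf
    rw [Real.rpow_neg (by positivity), Real.rpow_natCast]
    simp only [mul_pow, mul_inv, inv_pow]
  · rw [← Real.exp_nat_mul]
    congr 1
    push_cast
    field_simp

lemma integrable_heatKernel_mul (d : ℕ) {a b : ℝ} (ha : 0 < a) (hb : 0 < b)
    (x : EuclideanSpace ℝ (Fin d)) :
    Integrable (fun z : EuclideanSpace ℝ (Fin d) =>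
      heatKernel d a z * heatKernel d b (x - z)) := by
  have hc : 0 < a * b / (a + b) := by positivity
  simp only [heatKernel_mul d ha hb x]
  exact ((integrable_heatKernel d hc).comp_sub_right _).const_mul _

lemma integral_heatKernel_mul (d : ℕ) {a b : ℝ} (ha : 0 < a) (hb : 0 < b)
    (x : EuclideanSpace ℝ (Fin d)) :
    ∫ z : EuclideanSpace ℝ (Fin d), heatKernel d a z * heatKernel d b (x - z) =
      heatKernel d (a + b) x := by
  have hc : 0 < a * b / (a + b) := by positivity
  simp only [heatKernel_mul d ha hb x]
  rw [integral_const_mul, integral_sub_right_eq_self (heatKernel d (a * b / (a + b))),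
    integral_heatKernel d hc, mul_one]

lemma integrable_heatKernel_mul_sq (d : ℕ) {a b : ℝ} (ha : 0 < a) (hb : 0 < b)
    (x : EuclideanSpace ℝ (Fin d)) :
    Integrable (fun z : EuclideanSpace ℝ (Fin d) =>
      heatKernel d a z * heatKernel d b (x - z) ^ 2) := by
  have h : ∀ z : EuclideanSpace ℝ (Fin d), heatKernel d a z * heatKernel d b (x - z) ^ 2
      = (4 * π * b) ^ (-(d : ℝ) / 2) * (heatKernel d a z * heatKernel d (b / 2) (x - z)) := by
    intro z; rw [heatKernel_sq d hb]; ring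
  simp only [h]
  exact (integrable_heatKernel_mul d ha (by positivity) x).const_mul _

lemma integral_heatKernel_mul_sq (d : ℕ) {a b : ℝ} (ha : 0 < a) (hb : 0 < b)
    (x : EuclideanSpace ℝ (Fin d)) :
    ∫ z : EuclideanSpace ℝ (Fin d), heatKernel d a z * heatKernel d b (x - z) ^ 2 =
      (4 * π * b) ^ (-(d : ℝ) / 2) * heatKernel d (a + b / 2) x := by
  have h : ∀ z : EuclideanSpace ℝ (Fin d), heatKernel d a z * heatKernel d b (x - z) ^ 2
      = (4 * π * b) ^ (-(d : ℝ) / 2) * (heatKernel d a z * heatKernel d (b / 2) (x - z)) := by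
    intro z; rw [heatKernel_sq d hb]; ring
  simp only [h]
  rw [integral_const_mul, integral_heatKernel_mul d ha (by positivity) x]

lemma sq_rpow_helper {a : ℝ} (ha : 0 ≤ a) (c : ℝ) : (a ^ c) ^ 2 = (a ^ 2) ^ c := by
  rw [← Real.rpow_natCast (a ^ c) 2, ← Real.rpow_mul ha, mul_comm, Real.rpow_mul ha,
    Real.rpow_natCast]

lemma Jformula (d : ℕ) {t q s : ℝ} (ht : 0 < t) (hq : 0 < q) (hs : 0 < s)
    (x : EuclideanSpace ℝ (Fin d)) :
    (1 / (heatKernel d s x) ^ 2) * ((4 * π * t) ^ (-(d : ℝ) / 2) * heatKernel d q x) =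
      (s ^ 2 / (2 * t * q)) ^ ((d : ℝ) / 2) *
        Real.exp (‖x‖ ^ 2 / s - ‖x‖ ^ 2 / (2 * q)) := by
  have hπ := Real.pi_pos
  have hX : (0:ℝ) < (2 * π * s) ^ ((d:ℝ)/2) := Real.rpow_pos_of_pos (by positivity) _
  have hY : (0:ℝ) < (4 * π * t) ^ ((d:ℝ)/2) := Real.rpow_pos_of_pos (by positivity) _
  have hZ : (0:ℝ) < (2 * π * q) ^ ((d:ℝ)/2) := Real.rpow_pos_of_pos (by positivity) _
  have hX2 : ((2*π*s) ^ ((d:ℝ)/2))^2 =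
      (s^2/(2*t*q)) ^ ((d:ℝ)/2) * ((4*π*t) ^ ((d:ℝ)/2) * (2*π*q) ^ ((d:ℝ)/2)) := by
    rw [sq_rpow_helper (by positivity) _, ← Real.mul_rpow (by positivity) (by positivity),
      ← Real.mul_rpow (by positivity) (by positivity)]
    congr 1
    field_simp
    ring
  have hEs : (Real.exp (-‖x‖^2/(2*s)))^2 = Real.exp (-‖x‖^2/s) := by
    rw [← Real.exp_nat_mul]
    congr 1
    field_simp
    ring
  unfold heatKernel
  simp only [neg_div (2:ℝ), Real.rpow_neg (show (0:ℝ) ≤ 2*π*s by positivity),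
    Real.rpow_neg (show (0:ℝ) ≤ 4*π*t by positivity),
    Real.rpow_neg (show (0:ℝ) ≤ 2*π*q by positivity)]
  rw [show -‖x‖^2/(2*s) = -(‖x‖^2/(2*s)) from neg_div _ _]
  calc (1 / (((2*π*s) ^ ((d:ℝ)/2))⁻¹ * Real.exp (-(‖x‖^2/(2*s))))^2) *
        (((4*π*t) ^ ((d:ℝ)/2))⁻¹ * (((2*π*q) ^ ((d:ℝ)/2))⁻¹ * Real.exp (-‖x‖^2/(2*q))))
      = (((2*π*s) ^ ((d:ℝ)/2))^2 / ((4*π*t) ^ ((d:ℝ)/2) * (2*π*q) ^ ((d:ℝ)/2))) *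
        (Real.exp (-‖x‖^2/(2*q)) / (Real.exp (-(‖x‖^2/(2*s))))^2) := by
        field_simp
    _ = (s^2/(2*t*q)) ^ ((d:ℝ)/2) * Real.exp (‖x‖^2/s - ‖x‖^2/(2*q)) := by
        rw [hX2, mul_div_assoc, div_self (by positivity), mul_one]
        congr 1
        rw [show -(‖x‖^2/(2*s)) = -‖x‖^2/(2*s) from (neg_div _ _).symm, hEs,
          ← Real.exp_sub]
        congr 1
        ring


set_option maxHeartbeats 1000000 in
/-- There are constants `C > 0`, `c > 0` and `δ₀ ∈ (0, 1/2)`, depending only on `d`, such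
that for all `T > 0`, all `ℓ > 0` with `ℓ/T ≤ δ₀` and all `y ∈ ℝ^d`,
`∫ ρ_ℓ(Z) |ρ_{T/2-ℓ}(√T y - Z)/ρ_{T/2}(√T y) - 1| dZ
  ≤ C exp(c (ℓ/T) |y|²) (ℓ/T)^{1/2} (|y|² + 1)`. -/
theorem stmt_6 (d : ℕ) (hd : 1 ≤ d) :
    ∃ C c δ₀ : ℝ, 0 < C ∧ 0 < c ∧ 0 < δ₀ ∧ δ₀ < 1 / 2 ∧
      ∀ T ℓ : ℝ, 0 < T → 0 < ℓ → ℓ / T ≤ δ₀ → ∀ y : EuclideanSpace ℝ (Fin d),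
        (∫ Z, heatKernel d ℓ Z *
            |heatKernel d (T / 2 - ℓ) (Real.sqrt T • y - Z) /
                heatKernel d (T / 2) (Real.sqrt T • y) - 1| ∂volume) ≤
          C * Real.exp (c * (ℓ / T) * ‖y‖ ^ 2) * (ℓ / T) ^ ((1 : ℝ) / 2) *
            (‖y‖ ^ 2 + 1) := by
  refine ⟨Real.sqrt ((d : ℝ) + 4) * Real.exp (((d : ℝ) + 4) / 8), ((d : ℝ) + 4) / 2, 1 / 4,
    by positivity, by positivity, by norm_num, by norm_num, ?_⟩
  intro T ℓ hT hℓ hr4 y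
  have hr : 0 < ℓ / T := div_pos hℓ hT
  have hl4 : ℓ ≤ T / 4 := by rw [div_le_iff₀ hT] at hr4; linarith
  have hs : 0 < T / 2 := by linarith
  have ht : 0 < T / 2 - ℓ := by linarith
  have hq : 0 < ℓ + (T / 2 - ℓ) / 2 := by linarith
  set x : EuclideanSpace ℝ (Fin d) := Real.sqrt T • y with hxdef
  have hρ : 0 < heatKernel d (T / 2) x := heatKernel_pos d hs x
  set ρ := heatKernel d (T / 2) x with hρdef
  have hx2 : ‖x‖ ^ 2 = T * ‖y‖ ^ 2 := by
    rw [hxdef, norm_smul, mul_pow, Real.norm_eq_abs,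
      abs_of_nonneg (Real.sqrt_nonneg T), Real.sq_sqrt hT.le]
  set u : ℝ := ((d : ℝ) + 4) * (ℓ / T) * (‖y‖ ^ 2 + 1) with hudef
  have hu : 0 < u := by positivity
  set lam : ℝ := Real.sqrt u * Real.exp (u / 2) with hlamdef
  have hlam : 0 < lam := by positivity
  have hlamsq : lam ^ 2 = u * Real.exp u := by
    rw [hlamdef, mul_pow, Real.sq_sqrt hu.le, ← Real.exp_nat_mul,
      show ((2:ℕ):ℝ) * (u/2) = u by push_cast; ring]
  -- integrals
  have hiK : Integrable (heatKernel d ℓ) := integrable_heatKernel d hℓ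
  have hi1 : Integrable (fun z => heatKernel d ℓ z * heatKernel d (T/2-ℓ) (x - z)) :=
    integrable_heatKernel_mul d hℓ ht x
  have hi2 : Integrable (fun z => heatKernel d ℓ z * heatKernel d (T/2-ℓ) (x - z)^2) :=
    integrable_heatKernel_mul_sq d hℓ ht x
  have hI1 : ∫ z, heatKernel d ℓ z * heatKernel d (T/2-ℓ) (x - z) = ρ := by
    rw [integral_heatKernel_mul d hℓ ht x, show ℓ + (T/2 - ℓ) = T/2 by ring]
  set J : ℝ := (1/ρ^2) * ((4*π*(T/2-ℓ)) ^ (-(d:ℝ)/2) * heatKernel d (ℓ + (T/2-ℓ)/2) x)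
    with hJdef
  have expand : ∀ z, heatKernel d ℓ z * (heatKernel d (T/2-ℓ) (x - z) / ρ - 1)^2
      = (1/ρ^2) * (heatKernel d ℓ z * heatKernel d (T/2-ℓ) (x - z)^2)
        - (2/ρ) * (heatKernel d ℓ z * heatKernel d (T/2-ℓ) (x - z)) + heatKernel d ℓ z := by
    intro z; field_simp; ring
  have hIntSq : Integrable (fun z => heatKernel d ℓ z *
      (heatKernel d (T/2-ℓ) (x - z) / ρ - 1)^2) :=
    (((hi2.const_mul (1/ρ^2)).sub (hi1.const_mul (2/ρ))).add hiK).congr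
      (Filter.Eventually.of_forall fun z => (expand z).symm)
  have hIntVal : ∫ z, heatKernel d ℓ z * (heatKernel d (T/2-ℓ) (x - z) / ρ - 1)^2
      = J - 1 := by
    simp only [expand]
    have hsub : Integrable (fun z => 1/ρ^2 * (heatKernel d ℓ z * heatKernel d (T/2-ℓ) (x - z)^2)
        - 2/ρ * (heatKernel d ℓ z * heatKernel d (T/2-ℓ) (x - z))) :=
      (hi2.const_mul _).sub (hi1.const_mul _)
    rw [integral_add hsub hiK,
      integral_sub (hi2.const_mul _) (hi1.const_mul _),
      integral_const_mul, integral_const_mul, hI1,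
      integral_heatKernel_mul_sq d hℓ ht x, integral_heatKernel d hℓ,
      hJdef, div_mul_cancel₀ 2 (ne_of_gt hρ)]
    ring
  -- bound J ≤ exp u
  have hbpos : (0:ℝ) < 1 - 4*(ℓ/T)^2 := by nlinarith
  have hJle : J ≤ Real.exp u := by
    rw [hJdef, hρdef, Jformula d ht hq hs x]
    have hbase : (T/2)^2 / (2*(T/2-ℓ)*(ℓ + (T/2-ℓ)/2)) = (1 - 4*(ℓ/T)^2)⁻¹ := by
      have hflip : 1 - 4*(ℓ/T)^2 = (2*(T/2-ℓ)*(ℓ+(T/2-ℓ)/2))/((T/2)^2) := by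
        field_simp
        ring
      rw [hflip, inv_div]
    have hBle : (1 - 4*(ℓ/T)^2)⁻¹ ≤ Real.exp (8*(ℓ/T)^2) := by
      rw [inv_le_iff_one_le_mul₀ hbpos]
      have h2 := mul_le_mul_of_nonneg_right (Real.add_one_le_exp (8*(ℓ/T)^2)) hbpos.le
      have hsq : (ℓ/T)^2 ≤ 1/16 := by nlinarith
      have h3 : 0 ≤ (ℓ/T)^2*(1 - 8*(ℓ/T)^2) := mul_nonneg (sq_nonneg _) (by nlinarith)
      nlinarith
    have h1 : ((T/2)^2/(2*(T/2-ℓ)*(ℓ+(T/2-ℓ)/2))) ^ ((d:ℝ)/2) ≤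
        Real.exp ((d:ℝ)*(ℓ/T)) := by
      rw [hbase]
      calc ((1 - 4*(ℓ/T)^2)⁻¹) ^ ((d:ℝ)/2)
          ≤ (Real.exp (8*(ℓ/T)^2)) ^ ((d:ℝ)/2) :=
            Real.rpow_le_rpow (inv_nonneg.mpr hbpos.le) hBle (by positivity)
        _ = Real.exp (8*(ℓ/T)^2 * ((d:ℝ)/2)) := (Real.exp_mul _ _).symm
        _ ≤ Real.exp ((d:ℝ)*(ℓ/T)) := by
            apply Real.exp_le_exp.mpr
            have hd0 : (0:ℝ) ≤ (d:ℝ) := Nat.cast_nonneg d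
            nlinarith [mul_nonneg (mul_nonneg hd0 hr.le) (by linarith : (0:ℝ) ≤ 1 - 4*(ℓ/T))]
    have hE : ‖x‖^2/(T/2) - ‖x‖^2/(2*(ℓ+(T/2-ℓ)/2)) ≤ 4*(ℓ/T)*‖y‖^2 := by
      rw [hx2, show 2*(ℓ+(T/2-ℓ)/2) = T/2 + ℓ by ring,
        show (4:ℝ)*(ℓ/T)*‖y‖^2 = 4*ℓ*‖y‖^2/T by ring,
        div_sub_div _ _ hs.ne' (by positivity : (T/2+ℓ) ≠ 0),
        div_le_div_iff₀ (by positivity) hT]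
      nlinarith [mul_nonneg (mul_nonneg hT.le (sq_nonneg ℓ)) (sq_nonneg ‖y‖)]
    calc ((T/2)^2/(2*(T/2-ℓ)*(ℓ+(T/2-ℓ)/2))) ^ ((d:ℝ)/2) *
          Real.exp (‖x‖^2/(T/2) - ‖x‖^2/(2*(ℓ+(T/2-ℓ)/2)))
        ≤ Real.exp ((d:ℝ)*(ℓ/T)) * Real.exp (4*(ℓ/T)*‖y‖^2) := by
          exact mul_le_mul h1 (Real.exp_le_exp.mpr hE) (Real.exp_pos _).le (Real.exp_pos _).le
      _ = Real.exp ((d:ℝ)*(ℓ/T) + 4*(ℓ/T)*‖y‖^2) := (Real.exp_add _ _).symm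
      _ ≤ Real.exp u := by
          apply Real.exp_le_exp.mpr
          rw [hudef]
          nlinarith [mul_nonneg (mul_nonneg (Nat.cast_nonneg d : (0:ℝ) ≤ d) hr.le)
            (sq_nonneg ‖y‖), hr.le]
  -- main estimate: integral ≤ lam
  have hpt : ∀ z, heatKernel d ℓ z * |heatKernel d (T/2-ℓ) (x - z) / ρ - 1|
      ≤ (lam/2) * heatKernel d ℓ z +
        (1/(2*lam)) * (heatKernel d ℓ z * (heatKernel d (T/2-ℓ) (x - z) / ρ - 1)^2) := by
    intro z
    have hk := (heatKernel_pos d hℓ z).le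
    set v := heatKernel d (T/2-ℓ) (x - z) / ρ - 1 with hvdef
    have hb2 : 2*lam*|v| ≤ lam^2 + v^2 := by nlinarith [sq_nonneg (|v| - lam), sq_abs v]
    have h3 := mul_le_mul_of_nonneg_left hb2 hk
    calc heatKernel d ℓ z * |v|
        = (heatKernel d ℓ z * (2*lam*|v|))/(2*lam) := by field_simp
      _ ≤ (heatKernel d ℓ z * (lam^2 + v^2))/(2*lam) := by
          exact (div_le_div_iff_of_pos_right (show (0:ℝ) < 2*lam by positivity)).mpr h3
      _ = (lam/2) * heatKernel d ℓ z + (1/(2*lam)) * (heatKernel d ℓ z * v^2) := by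
          field_simp
  have hmain : (∫ z, heatKernel d ℓ z * |heatKernel d (T/2-ℓ) (x - z) / ρ - 1|) ≤ lam := by
    have hInt_rhs : Integrable (fun z => (lam/2) * heatKernel d ℓ z +
        (1/(2*lam)) * (heatKernel d ℓ z * (heatKernel d (T/2-ℓ) (x - z) / ρ - 1)^2)) :=
      (hiK.const_mul _).add (hIntSq.const_mul _)
    calc (∫ z, heatKernel d ℓ z * |heatKernel d (T/2-ℓ) (x - z) / ρ - 1|)
        ≤ ∫ z, ((lam/2) * heatKernel d ℓ z +
            (1/(2*lam)) * (heatKernel d ℓ z * (heatKernel d (T/2-ℓ) (x - z) / ρ - 1)^2)) :=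
          integral_mono_of_nonneg
            (Filter.Eventually.of_forall fun z =>
              mul_nonneg (heatKernel_pos d hℓ z).le (abs_nonneg _))
            hInt_rhs (Filter.Eventually.of_forall hpt)
      _ = (lam/2) * 1 + (1/(2*lam)) * (J - 1) := by
          rw [integral_add (hiK.const_mul _) (hIntSq.const_mul _),
            integral_const_mul, integral_const_mul, integral_heatKernel d hℓ, hIntVal]
      _ ≤ lam/2 + (1/(2*lam)) * (u * Real.exp u) := by
          have hJ1 : J - 1 ≤ u * Real.exp u := by
            have h := Real.add_one_le_exp (-u)
            have hmulu : Real.exp u * Real.exp (-u) = 1 := by rw [← Real.exp_add]; simp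
            nlinarith [Real.exp_pos u]
          have := mul_le_mul_of_nonneg_left hJ1 (by positivity : (0:ℝ) ≤ 1/(2*lam))
          linarith
      _ = lam := by rw [← hlamsq]; field_simp; ring
  -- final numeric bound on lam
  have h1 : Real.sqrt (‖y‖^2+1) ≤ ‖y‖^2+1 := by
    nlinarith [Real.sq_sqrt (by positivity : (0:ℝ) ≤ ‖y‖^2+1),
      Real.sqrt_nonneg (‖y‖^2+1)]
  have h2 : Real.exp (u/2) ≤
      Real.exp ((((d:ℝ)+4)/2) * (ℓ/T) * ‖y‖^2) * Real.exp (((d:ℝ)+4)/8) := by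
    rw [← Real.exp_add]
    apply Real.exp_le_exp.mpr
    rw [hudef]
    have hd0 : (0:ℝ) ≤ (d:ℝ) + 4 := by positivity
    nlinarith [mul_nonneg hd0 (by linarith : (0:ℝ) ≤ 1/4 - ℓ/T)]
  have hfinal : lam ≤ (Real.sqrt ((d:ℝ)+4) * Real.exp (((d:ℝ)+4)/8)) *
      Real.exp ((((d:ℝ)+4)/2) * (ℓ/T) * ‖y‖^2) * (ℓ/T)^((1:ℝ)/2) * (‖y‖^2+1) := by
    have hsplit : Real.sqrt u =
        Real.sqrt ((d:ℝ)+4) * Real.sqrt (ℓ/T) * Real.sqrt (‖y‖^2+1) := by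
      rw [hudef, Real.sqrt_mul (by positivity), Real.sqrt_mul (by positivity)]
    calc lam = Real.sqrt ((d:ℝ)+4) * (ℓ/T)^((1:ℝ)/2) *
          (Real.sqrt (‖y‖^2+1) * Real.exp (u/2)) := by
          rw [hlamdef, hsplit, Real.sqrt_eq_rpow (ℓ/T)]; ring
      _ ≤ Real.sqrt ((d:ℝ)+4) * (ℓ/T)^((1:ℝ)/2) *
          ((‖y‖^2+1) * (Real.exp ((((d:ℝ)+4)/2) * (ℓ/T) * ‖y‖^2) *
            Real.exp (((d:ℝ)+4)/8))) := by
          apply mul_le_mul_of_nonneg_left _ (by positivity)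
          exact mul_le_mul h1 h2 (Real.exp_pos _).le (by positivity)
      _ = (Real.sqrt ((d:ℝ)+4) * Real.exp (((d:ℝ)+4)/8)) *
          Real.exp ((((d:ℝ)+4)/2) * (ℓ/T) * ‖y‖^2) * (ℓ/T)^((1:ℝ)/2) * (‖y‖^2+1) := by
          ring
  exact le_trans hmain hfinal
end

section
/- Let d ≥ 1, let ρ_t(x) = (2πt)^{-d/2} exp(−|x|²/(2t)) denote the standard heat kernel on ℝ^d, and let c > 0. There exist constants C > 0 and δ₀ ∈ (0, 1), depending only on d and c, such that for every δ ∈ (0, δ₀] and every x ∈ ℝ^d, ∫_{ℝ^d} (ρ_{1/2}(y) · ρ_{1/2}(x − y) / ρ_1(x)) · (|y|² + 1) · exp(c·δ·|y|²) dy ≤ C · exp(c·δ·|x|²) · (|x|² + 1). -/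
open MeasureTheory Real

lemma heat_ratio (d : ℕ) (x y : EuclideanSpace ℝ (Fin d)) :
    heatKernel d (1 / 2) y * heatKernel d (1 / 2) (x - y) / heatKernel d 1 x
      = (π ^ (-(d : ℝ)) * (2 * π) ^ ((d : ℝ) / 2)) *
        Real.exp (-2 * ‖y - (2 : ℝ)⁻¹ • x‖ ^ 2) := by
  have hπ : (0 : ℝ) < π := pi_pos
  have h1 : (2 * π * (1 / 2) : ℝ) = π := by ring
  have h2 : (2 * π * 1 : ℝ) = 2 * π := by ring
  unfold heatKernel
  rw [h1, h2]
  set A : ℝ := π ^ (-(d : ℝ) / 2) with hAdef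
  set B : ℝ := (2 * π : ℝ) ^ (-(d : ℝ) / 2) with hBdef
  have hApos : 0 < A := Real.rpow_pos_of_pos hπ _
  have hBpos : 0 < B := Real.rpow_pos_of_pos (by positivity) _
  set s1 : ℝ := -‖y‖ ^ 2 / (2 * (1 / 2))
  set s2 : ℝ := -‖x - y‖ ^ 2 / (2 * (1 / 2))
  set s3 : ℝ := -‖x‖ ^ 2 / (2 * 1)
  have hA : A * A = π ^ (-(d : ℝ)) := by
    rw [hAdef, ← Real.rpow_add hπ]; ring_nf
  have hB : B⁻¹ = (2 * π) ^ ((d : ℝ) / 2) := by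
    rw [hBdef, ← Real.rpow_neg (by positivity)]; ring_nf
  have hexp : s1 + s2 - s3 = -2 * ‖y - (2 : ℝ)⁻¹ • x‖ ^ 2 := by
    have e1 : ‖x - y‖ ^ 2 = ‖x‖ ^ 2 - 2 * inner ℝ x y + ‖y‖ ^ 2 := norm_sub_sq_real x y
    have e2 : ‖y - (2 : ℝ)⁻¹ • x‖ ^ 2
        = ‖y‖ ^ 2 - 2 * ((2 : ℝ)⁻¹ * inner ℝ y x) + ((2 : ℝ)⁻¹ * ‖x‖) ^ 2 := by
      rw [norm_sub_sq_real, real_inner_smul_right, norm_smul]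
      norm_num
    have e3 : (inner ℝ x y : ℝ) = inner ℝ y x := real_inner_comm y x
    simp only [s1, s2, s3, e1, e2, e3]; ring
  calc A * Real.exp s1 * (A * Real.exp s2) / (B * Real.exp s3)
      = (A * A * B⁻¹) * (Real.exp s1 * Real.exp s2 / Real.exp s3) := by
        field_simp
    _ = (π ^ (-(d : ℝ)) * (2 * π) ^ ((d : ℝ) / 2)) * Real.exp (s1 + s2 - s3) := by
        rw [hA, hB, ← Real.exp_add, ← Real.exp_sub]
    _ = _ := by rw [hexp]

lemma pt_real_bound {a u w r : ℝ} (ha0 : 0 ≤ a) (ha : a ≤ 1 / 2) (hu : 0 ≤ u) (hw : 0 ≤ w)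
    (hr0 : 0 ≤ r) (hr : r ≤ 2 * u + w / 2) :
    Real.exp (-2 * u) * ((r + 1) * Real.exp (a * r))
      ≤ 5 * Real.exp (a * w) * (w + 1) * Real.exp (-(1 / 2) * u) := by
  have h5 : 2 * u + 1 ≤ 5 * Real.exp (u / 2) := by
    nlinarith [Real.add_one_le_exp (u / 2), Real.exp_pos (u / 2)]
  have hr1 : r + 1 ≤ (2 * u + 1) * (w + 1) := by nlinarith
  have hr2 : Real.exp (a * r) ≤ Real.exp (u + a * w) := by
    apply Real.exp_le_exp.2
    nlinarith
  calc Real.exp (-2 * u) * ((r + 1) * Real.exp (a * r))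
      ≤ Real.exp (-2 * u) * ((5 * Real.exp (u / 2) * (w + 1)) * Real.exp (u + a * w)) := by
        apply mul_le_mul_of_nonneg_left _ (Real.exp_pos _).le
        apply mul_le_mul _ hr2 (Real.exp_pos _).le (by positivity)
        exact le_trans hr1 (by nlinarith [Real.exp_pos (u/2)])
    _ = 5 * Real.exp (a * w) * (w + 1) * Real.exp (-(1 / 2) * u) := by
        rw [show Real.exp (-2 * u) * (5 * Real.exp (u / 2) * (w + 1) * Real.exp (u + a * w))
            = 5 * (w + 1) * (Real.exp (-2 * u) * Real.exp (u / 2) * Real.exp (u + a * w)) from by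
            ring, ← Real.exp_add, ← Real.exp_add,
          show -2 * u + u / 2 + (u + a * w) = a * w + -(1 / 2) * u from by ring, Real.exp_add]
        ring

/-- Given `c > 0`, there are constants `C > 0` and `δ₀ ∈ (0,1)`, depending only on `d`
and `c`, such that for every `δ ∈ (0, δ₀]` and every `x ∈ ℝ^d`,
`∫ (ρ_{1/2}(y) ρ_{1/2}(x-y)/ρ_1(x)) (|y|² + 1) exp(cδ|y|²) dy
  ≤ C exp(cδ|x|²) (|x|² + 1)`. -/
theorem stmt_7 (d : ℕ) (hd : 1 ≤ d) (c : ℝ) (hc : 0 < c) :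
    ∃ C δ₀ : ℝ, 0 < C ∧ 0 < δ₀ ∧ δ₀ < 1 ∧
      ∀ δ : ℝ, 0 < δ → δ ≤ δ₀ → ∀ x : EuclideanSpace ℝ (Fin d),
        (∫ y, heatKernel d (1 / 2) y * heatKernel d (1 / 2) (x - y) / heatKernel d 1 x *
            ((‖y‖ ^ 2 + 1) * Real.exp (c * δ * ‖y‖ ^ 2)) ∂volume) ≤
          C * Real.exp (c * δ * ‖x‖ ^ 2) * (‖x‖ ^ 2 + 1) := by
  have hπ : (0 : ℝ) < π := pi_pos
  set K : ℝ := π ^ (-(d : ℝ)) * (2 * π) ^ ((d : ℝ) / 2) with hKdef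
  have hK : 0 < K := mul_pos (Real.rpow_pos_of_pos hπ _) (Real.rpow_pos_of_pos (by positivity) _)
  refine ⟨5 * K * (2 * π) ^ ((d : ℝ) / 2), min (1 / 2) (1 / (2 * c)), by
    positivity, by positivity, lt_of_le_of_lt (min_le_left _ _) (by norm_num), ?_⟩
  intro δ hδ0 hδ x
  have ha0 : 0 ≤ c * δ := by positivity
  have ha : c * δ ≤ 1 / 2 := by
    have h1 : δ ≤ 1 / (2 * c) := le_trans hδ (min_le_right _ _)
    calc c * δ ≤ c * (1 / (2 * c)) := by nlinarith
      _ = 1 / 2 := by field_simp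
  -- integrability of the dominating Gaussian
  have hint0 : Integrable (fun v : EuclideanSpace ℝ (Fin d) ↦ Real.exp (-(1 / 2) * ‖v‖ ^ 2)) := by
    have h := (GaussianFourier.integrable_cexp_neg_mul_sq_norm_add (V := EuclideanSpace ℝ (Fin d))
      (b := ((1 : ℂ) / 2)) (by norm_num) 0 0).norm
    simpa [Complex.norm_exp, ← Complex.ofReal_pow] using h
  set M : ℝ := 5 * K * Real.exp (c * δ * ‖x‖ ^ 2) * (‖x‖ ^ 2 + 1) with hMdef
  have hM : 0 ≤ M := by positivity
  have hint : Integrable (fun y : EuclideanSpace ℝ (Fin d) ↦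
      M * Real.exp (-(1 / 2) * ‖y - (2 : ℝ)⁻¹ • x‖ ^ 2)) :=
    (hint0.comp_sub_right ((2 : ℝ)⁻¹ • x)).const_mul M
  have hmono : (∫ y, heatKernel d (1 / 2) y * heatKernel d (1 / 2) (x - y) / heatKernel d 1 x *
        ((‖y‖ ^ 2 + 1) * Real.exp (c * δ * ‖y‖ ^ 2)) ∂volume) ≤
      ∫ y, M * Real.exp (-(1 / 2) * ‖y - (2 : ℝ)⁻¹ • x‖ ^ 2) ∂volume := by
    apply integral_mono_of_nonneg
    · filter_upwards with y
      rw [heat_ratio]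
      positivity
    · exact hint
    · filter_upwards with y
      rw [heat_ratio]
      have hnorm : ‖y‖ ^ 2 ≤ 2 * ‖y - (2 : ℝ)⁻¹ • x‖ ^ 2 + ‖x‖ ^ 2 / 2 := by
        have h1 : ‖y‖ ≤ ‖y - (2 : ℝ)⁻¹ • x‖ + ‖(2 : ℝ)⁻¹ • x‖ := by
          simpa using norm_add_le (y - (2 : ℝ)⁻¹ • x) ((2 : ℝ)⁻¹ • x)
        have h2 : ‖(2 : ℝ)⁻¹ • x‖ = 2⁻¹ * ‖x‖ := by
          rw [norm_smul]; simp
        rw [h2] at h1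
        nlinarith [norm_nonneg y, norm_nonneg (y - (2 : ℝ)⁻¹ • x), norm_nonneg x,
          sq_nonneg (‖y - (2 : ℝ)⁻¹ • x‖ - 2⁻¹ * ‖x‖)]
      have hb := pt_real_bound ha0 ha (by positivity : (0:ℝ) ≤ ‖y - (2 : ℝ)⁻¹ • x‖ ^ 2)
        (by positivity : (0:ℝ) ≤ ‖x‖ ^ 2) (by positivity : (0:ℝ) ≤ ‖y‖ ^ 2) hnorm
      calc K * Real.exp (-2 * ‖y - (2 : ℝ)⁻¹ • x‖ ^ 2) *
            ((‖y‖ ^ 2 + 1) * Real.exp (c * δ * ‖y‖ ^ 2))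
          = K * (Real.exp (-2 * ‖y - (2 : ℝ)⁻¹ • x‖ ^ 2) *
            ((‖y‖ ^ 2 + 1) * Real.exp (c * δ * ‖y‖ ^ 2))) := by ring
        _ ≤ K * (5 * Real.exp (c * δ * ‖x‖ ^ 2) * (‖x‖ ^ 2 + 1) *
            Real.exp (-(1 / 2) * ‖y - (2 : ℝ)⁻¹ • x‖ ^ 2)) :=
            mul_le_mul_of_nonneg_left hb hK.le
        _ = M * Real.exp (-(1 / 2) * ‖y - (2 : ℝ)⁻¹ • x‖ ^ 2) := by rw [hMdef]; ring
  refine hmono.trans ?_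
  rw [MeasureTheory.integral_const_mul,
    show (fun y : EuclideanSpace ℝ (Fin d) ↦ Real.exp (-(1 / 2) * ‖y - (2 : ℝ)⁻¹ • x‖ ^ 2))
      = fun y ↦ (fun z : EuclideanSpace ℝ (Fin d) ↦ Real.exp (-(1 / 2) * ‖z‖ ^ 2))
        (y - (2 : ℝ)⁻¹ • x) from rfl,
    integral_sub_right_eq_self (μ := volume)
      (fun z : EuclideanSpace ℝ (Fin d) ↦ Real.exp (-(1 / 2) * ‖z‖ ^ 2)) ((2 : ℝ)⁻¹ • x)]
  have hgauss : (∫ z : EuclideanSpace ℝ (Fin d), Real.exp (-(1 / 2) * ‖z‖ ^ 2))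
      = (2 * π) ^ ((d : ℝ) / 2) := by
    rw [show (-(1/2 : ℝ)) = -(1/2 : ℝ) from rfl]
    rw [GaussianFourier.integral_rexp_neg_mul_sq_norm (by norm_num : (0:ℝ) < 1/2)]
    rw [finrank_euclideanSpace_fin]
    congr 1
    ring
  rw [hgauss, hMdef]
  apply le_of_eq
  ring
end
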